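/- Let P_n = p_1 p_2 ⋯ p_n denote the n-th primorial. For every positive integer m with m < P_n and 2m ≠ P_n, one has 𝒮(m) < 𝒮(P_n). -/

import Mathlib

open Finset

/-- The Sylvester factor `𝒮 n = ∏_{p ∣ n, p odd prime} (p-1)/(p-2)`. -/
noncomputable def sylvester (n : ℕ) : ℚ :=
  ∏ p ∈ n.primeFactors.erase 2, ((p : ℚ) - 1) / ((p : ℚ) - 2)

/-- The sequence of primes in increasing order (0-indexed:
`nthPrime 0 = 2`, `nthPrime 1 = 3`, ...). -/
noncomputable def nthPrime (n : ℕ) : ℕ := Nat.nth Nat.Prime n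

/-- The `n`-th primorial `P n = p_1 * p_2 * ⋯ * p_n`. -/
noncomputable def primorialSeq (n : ℕ) : ℕ := ∏ i ∈ Finset.range n, nthPrime i

namespace SylvesterAux

noncomputable def f (p : ℕ) : ℚ := ((p : ℚ) - 1) / ((p : ℚ) - 2)

lemma nthPrime_prime (n : ℕ) : (nthPrime n).Prime :=
  Nat.nth_mem_of_infinite Nat.infinite_setOf_prime n

lemma nthPrime_strictMono : StrictMono nthPrime :=
  Nat.nth_strictMono Nat.infinite_setOf_prime

lemma count_prime_two : Nat.count Nat.Prime 2 = 0 := by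
  rw [Nat.count_eq_card_filter_range]; decide

lemma nthPrime_zero : nthPrime 0 = 2 := by
  have := Nat.nth_count (p := Nat.Prime) (n := 2) Nat.prime_two
  rwa [count_prime_two] at this

lemma three_le_nthPrime {i : ℕ} (hi : 1 ≤ i) : 3 ≤ nthPrime i := by
  have h := nthPrime_strictMono (show 0 < i from hi)
  rw [nthPrime_zero] at h
  have := (nthPrime_prime i).two_le
  omega

lemma one_lt_f {p : ℕ} (hp : 3 ≤ p) : 1 < f p := by
  have hp' : (3 : ℚ) ≤ (p : ℚ) := by exact_mod_cast hp
  have h2 : (0 : ℚ) < (p : ℚ) - 2 := by linarith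
  rw [f, lt_div_iff₀ h2]; linarith

lemma f_pos {p : ℕ} (hp : 3 ≤ p) : 0 < f p := lt_trans one_pos (one_lt_f hp)

lemma f_le_f {p q : ℕ} (hp : 3 ≤ p) (hpq : p ≤ q) : f q ≤ f p := by
  have hp' : (3 : ℚ) ≤ (p : ℚ) := by exact_mod_cast hp
  have hq' : (p : ℚ) ≤ (q : ℚ) := by exact_mod_cast hpq
  have h2p : (0 : ℚ) < (p : ℚ) - 2 := by linarith
  have h2q : (0 : ℚ) < (q : ℚ) - 2 := by linarith
  rw [f, f, div_le_div_iff₀ h2q h2p]; nlinarith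

lemma f_lt_f {p q : ℕ} (hp : 3 ≤ p) (hpq : p < q) : f q < f p := by
  have hp' : (3 : ℚ) ≤ (p : ℚ) := by exact_mod_cast hp
  have hq' : (p : ℚ) < (q : ℚ) := by exact_mod_cast hpq
  have h2p : (0 : ℚ) < (p : ℚ) - 2 := by linarith
  have h2q : (0 : ℚ) < (q : ℚ) - 2 := by linarith
  rw [f, f, div_lt_div_iff₀ h2q h2p]; nlinarith

lemma primorialSeq_ne_zero (n : ℕ) : primorialSeq n ≠ 0 :=
  Finset.prod_ne_zero_iff.2 fun i _ => (nthPrime_prime i).pos.ne'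

lemma primeFactors_primorial (n : ℕ) :
    (primorialSeq n).primeFactors = (Finset.range n).image nthPrime := by
  ext p
  simp only [Nat.mem_primeFactors, Finset.mem_image, Finset.mem_range]
  constructor
  · rintro ⟨hp, hdvd, -⟩
    rcases (hp.prime.dvd_finset_prod_iff _).1 hdvd with ⟨i, hi, hpi⟩
    exact ⟨i, Finset.mem_range.1 hi,
      ((Nat.prime_dvd_prime_iff_eq hp (nthPrime_prime i)).1 hpi).symm⟩
  · rintro ⟨i, hi, rfl⟩
    exact ⟨nthPrime_prime i, Finset.dvd_prod_of_mem _ (Finset.mem_range.2 hi),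
      primorialSeq_ne_zero n⟩

lemma erase_primeFactors_primorial (n : ℕ) :
    (primorialSeq n).primeFactors.erase 2 = (Finset.Ico 1 n).image nthPrime := by
  rw [primeFactors_primorial]
  ext p
  simp only [Finset.mem_erase, Finset.mem_image, Finset.mem_range, Finset.mem_Ico]
  constructor
  · rintro ⟨hp2, i, hi, rfl⟩
    refine ⟨i, ⟨?_, hi⟩, rfl⟩
    rcases Nat.eq_zero_or_pos i with rfl | h
    · exact absurd nthPrime_zero hp2
    · exact h
  · rintro ⟨i, ⟨h1, h2⟩, rfl⟩
    have := three_le_nthPrime h1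
    exact ⟨by omega, i, h2, rfl⟩

lemma sylvester_primorial (n : ℕ) :
    sylvester (primorialSeq n) = ∏ i ∈ Finset.Ico 1 n, f (nthPrime i) := by
  rw [sylvester, erase_primeFactors_primorial, Finset.prod_image]
  · rfl
  · exact fun a _ b _ h => nthPrime_strictMono.injective h

end SylvesterAux

open SylvesterAux

theorem sylvester_stmt16 (n m : ℕ) (hm : 1 ≤ m) (hlt : m < primorialSeq n)
    (hne : 2 * m ≠ primorialSeq n) :
    sylvester m < sylvester (primorialSeq n) := by
  -- basic setup
  have hn : 1 ≤ n := by
    by_contra h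
    push_neg at h
    interval_cases n
    simp [primorialSeq] at hlt
    omega
  set S : Finset ℕ := m.primeFactors.erase 2 with hS
  set k := S.card with hk
  set e : Fin k ↪o ℕ := S.orderEmbOfFin rfl with he
  have hmem : ∀ i : Fin k, e i ∈ S := fun i => Finset.orderEmbOfFin_mem S rfl i
  have hprime : ∀ q ∈ S, q.Prime := by
    intro q hq
    exact Nat.prime_of_mem_primeFactors (Finset.mem_of_mem_erase hq)
  have hodd : ∀ q ∈ S, 3 ≤ q := by
    intro q hq
    have h2 : q ≠ 2 := Finset.ne_of_mem_erase hq
    have := (hprime q hq).two_le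
    omega
  -- key rank bound : nthPrime (i+1) ≤ e i
  have hcount0 : ∀ j (hj : j < k), j + 1 ≤ Nat.count Nat.Prime (e ⟨j, hj⟩) := by
    intro j
    induction j with
    | zero =>
      intro hj
      have h3 : 3 ≤ e ⟨0, hj⟩ := hodd _ (hmem _)
      have := Nat.count_strict_mono (p := Nat.Prime) Nat.prime_two
        (show 2 < e ⟨0, hj⟩ by omega)
      rw [count_prime_two] at this
      omega
    | succ j ih =>
      intro hj
      have hj' : j < k := by omega
      have hlt' : (e ⟨j, hj'⟩ : ℕ) < e ⟨j + 1, hj⟩ :=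
        e.strictMono (show (⟨j, hj'⟩ : Fin k) < ⟨j + 1, hj⟩ from by
          simp [Fin.lt_def])
      have hst := Nat.count_strict_mono (hprime _ (hmem ⟨j, hj'⟩)) hlt'
      have h2 := ih hj'
      omega
  have hcount : ∀ i : Fin k, (i : ℕ) + 1 ≤ Nat.count Nat.Prime (e i) := by
    intro i
    have := hcount0 i.val i.isLt
    simpa [Fin.eta] using this
  have hkey : ∀ i : Fin k, nthPrime ((i : ℕ) + 1) ≤ e i := by
    intro i
    have h1 : Nat.nth Nat.Prime (Nat.count Nat.Prime (e i)) = e i :=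
      Nat.nth_count (hprime _ (hmem i))
    calc nthPrime ((i : ℕ) + 1) ≤ nthPrime (Nat.count Nat.Prime (e i)) :=
          nthPrime_strictMono.monotone (hcount i)
      _ = e i := h1
  -- sylvester m as a product over Fin k
  have himg : Finset.image (fun i => e i) Finset.univ = S := by
    apply Finset.coe_injective
    rw [Finset.coe_image, Finset.coe_univ, Set.image_univ]
    exact Finset.range_orderEmbOfFin S rfl
  have hsm : sylvester m = ∏ i : Fin k, f (e i) := by
    rw [sylvester, ← hS, ← himg, Finset.prod_image (fun a _ b _ h => e.injective h)]
    rfl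
  -- product over Ico 1 (k+1) equals product over Fin k
  have hIco : ∀ (K : ℕ) (g : ℕ → ℚ), ∏ i ∈ Finset.Ico 1 (K + 1), g i
      = ∏ i : Fin K, g ((i : ℕ) + 1) := by
    intro K g
    rw [Finset.prod_Ico_eq_prod_range]
    simp only [Nat.add_sub_cancel]
    rw [← Fin.prod_univ_eq_prod_range (fun i => g (1 + i)) K]
    exact Finset.prod_congr rfl fun i _ => by rw [add_comm]
  have hIcoN : ∀ (K : ℕ) (g : ℕ → ℕ), ∏ i ∈ Finset.Ico 1 (K + 1), g i
      = ∏ i : Fin K, g ((i : ℕ) + 1) := by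
    intro K g
    rw [Finset.prod_Ico_eq_prod_range]
    simp only [Nat.add_sub_cancel]
    rw [← Fin.prod_univ_eq_prod_range (fun i => g (1 + i)) K]
    exact Finset.prod_congr rfl fun i _ => by rw [add_comm]
  -- Q : odd part of primorial
  set Q := ∏ i ∈ Finset.Ico 1 n, nthPrime i with hQ
  have hPQ : primorialSeq n = 2 * Q := by
    rw [primorialSeq, Finset.range_eq_Ico, Finset.prod_eq_prod_Ico_succ_bot hn, nthPrime_zero]
  have hQpos : 0 < Q := Finset.prod_pos fun i _ => (nthPrime_prime i).pos
  -- prod of elements of S divides m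
  have hSdvd : (∏ q ∈ S, q) ∣ m := by
    calc (∏ q ∈ S, q) ∣ ∏ q ∈ m.primeFactors, q :=
          Finset.prod_dvd_prod_of_subset _ _ _ (Finset.erase_subset _ _)
      _ ∣ m := Nat.prod_primeFactors_dvd m
  -- k < n
  have hkn : k < n := by
    by_contra h
    push_neg at h
    have h1 : (∏ q ∈ S, q) ≤ m := Nat.le_of_dvd hm hSdvd
    have h2 : (∏ i : Fin k, nthPrime ((i : ℕ) + 1)) ≤ ∏ q ∈ S, q := by
      rw [← himg, Finset.prod_image (fun a _ b _ hab => e.injective hab)]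
      exact Finset.prod_le_prod' fun i _ => hkey i
    have h3 : (∏ i ∈ Finset.Ico 1 (n + 1), nthPrime i) ≤ ∏ i ∈ Finset.Ico 1 (k + 1), nthPrime i := by
      apply Finset.prod_le_prod_of_subset_of_one_le'
      · exact Finset.Ico_subset_Ico le_rfl (by omega)
      · exact fun i _ _ => (nthPrime_prime i).pos
    have h4 : ∏ i ∈ Finset.Ico 1 (n + 1), nthPrime i = Q * nthPrime n := by
      rw [hQ, Finset.prod_Ico_succ_top hn]
    have h5 : 3 ≤ nthPrime n := three_le_nthPrime hn
    have h6 : (∏ i ∈ Finset.Ico 1 (k + 1), nthPrime i) = ∏ i : Fin k, nthPrime ((i : ℕ) + 1) :=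
      hIcoN k nthPrime
    have : 3 * Q ≤ m := by
      calc 3 * Q ≤ Q * nthPrime n := by rw [mul_comm]; exact Nat.mul_le_mul_left Q h5
        _ = ∏ i ∈ Finset.Ico 1 (n + 1), nthPrime i := h4.symm
        _ ≤ ∏ i ∈ Finset.Ico 1 (k + 1), nthPrime i := h3
        _ = ∏ i : Fin k, nthPrime ((i : ℕ) + 1) := h6
        _ ≤ ∏ q ∈ S, q := h2
        _ ≤ m := h1
    rw [hPQ] at hlt
    omega
  -- step 1 : sylvester m ≤ ∏_{Ico 1 (k+1)} f ∘ nthPrime, strict if some e i strict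
  have hstep1 : sylvester m ≤ ∏ i ∈ Finset.Ico 1 (k + 1), f (nthPrime i) := by
    rw [hsm, hIco]
    apply Finset.prod_le_prod
    · exact fun i _ => le_of_lt (f_pos (hodd _ (hmem i)))
    · exact fun i _ => f_le_f (three_le_nthPrime (by omega)) (hkey i)
  -- step 3 : ∏_{Ico 1 (k+1)} ≤ sylvester P_n, strict if k+1 < n
  have hsplit : (∏ i ∈ Finset.Ico 1 (k + 1), f (nthPrime i)) *
      (∏ i ∈ Finset.Ico (k + 1) n, f (nthPrime i))
      = ∏ i ∈ Finset.Ico 1 n, f (nthPrime i) :=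
    Finset.prod_Ico_consecutive _ (by omega : 1 ≤ k + 1) (by omega : k + 1 ≤ n)
  have hapos : 0 < ∏ i ∈ Finset.Ico 1 (k + 1), f (nthPrime i) :=
    Finset.prod_pos fun i hi => f_pos (three_le_nthPrime (Finset.mem_Ico.1 hi).1)
  have hb1 : 1 ≤ ∏ i ∈ Finset.Ico (k + 1) n, f (nthPrime i) := by
    rw [← Finset.prod_const_one (s := Finset.Ico (k + 1) n)]
    apply Finset.prod_le_prod
    · exact fun i _ => zero_le_one
    · exact fun i hi => le_of_lt (one_lt_f (three_le_nthPrime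
        (le_trans (by omega) (Finset.mem_Ico.1 hi).1)))
  have hstep3 : (∏ i ∈ Finset.Ico 1 (k + 1), f (nthPrime i))
      ≤ ∏ i ∈ Finset.Ico 1 n, f (nthPrime i) := by
    rw [← hsplit]
    nlinarith
  rw [sylvester_primorial]
  -- case analysis on strictness
  by_cases hcase : k + 1 < n
  · -- strict from the extra factor
    have hb1' : 1 < ∏ i ∈ Finset.Ico (k + 1) n, f (nthPrime i) := by
      rw [← Finset.prod_const_one (s := Finset.Ico (k + 1) n)]
      apply Finset.prod_lt_prod
      · exact fun i _ => zero_lt_one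
      · exact fun i hi => le_of_lt (one_lt_f (three_le_nthPrime
          (le_trans (by omega) (Finset.mem_Ico.1 hi).1)))
      · exact ⟨k + 1, Finset.mem_Ico.2 ⟨le_rfl, hcase⟩,
          one_lt_f (three_le_nthPrime (by omega))⟩
    have hstrict : (∏ i ∈ Finset.Ico 1 (k + 1), f (nthPrime i))
        < ∏ i ∈ Finset.Ico 1 n, f (nthPrime i) := by
      rw [← hsplit]
      nlinarith
    exact lt_of_le_of_lt hstep1 hstrict
  · -- k + 1 = n
    have hkn' : k + 1 = n := by omega
    by_cases hex : ∃ i : Fin k, nthPrime ((i : ℕ) + 1) < e i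
    · -- strict inside the product
      obtain ⟨i0, hi0⟩ := hex
      have hstrict : sylvester m < ∏ i ∈ Finset.Ico 1 (k + 1), f (nthPrime i) := by
        rw [hsm, hIco]
        apply Finset.prod_lt_prod
        · exact fun i _ => f_pos (hodd _ (hmem i))
        · exact fun i _ => f_le_f (three_le_nthPrime (by omega)) (hkey i)
        · exact ⟨i0, Finset.mem_univ i0, f_lt_f (three_le_nthPrime (by omega)) hi0⟩
      exact lt_of_lt_of_le hstrict (hkn' ▸ hstep3)
    · -- all equal : m is a multiple of Q, contradiction
      exfalso
      push_neg at hex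
      have heq : ∀ i : Fin k, e i = nthPrime ((i : ℕ) + 1) :=
        fun i => le_antisymm (hex i) (hkey i)
      -- then every nthPrime j for 1 ≤ j < n divides m
      have hdvd : Q ∣ m := by
        have himQ : Q = ∏ q ∈ S, q := by
          rw [hQ, ← hkn', hIcoN k nthPrime, ← himg,
            Finset.prod_image (fun a _ b _ hab => e.injective hab)]
          exact (Finset.prod_congr rfl fun i _ => (heq i).symm)
        rw [himQ]
        exact hSdvd
      obtain ⟨t, rfl⟩ := hdvd
      rw [hPQ] at hlt hne
      have ht2 : t < 2 := by
        by_contra h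
        push_neg at h
        have : Q * 2 ≤ Q * t := Nat.mul_le_mul_left Q h
        omega
      interval_cases t
      · omega
      · omega
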